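/- In the minimal tree realization M(C; T, ω), for every vertex v and every edge e incident with v: dim(S*_e) ≤ dim(C*_v) ≤ dim(C|_{ω^{-1}(v)}) + ∑_{e' ∈ E(v), e' ≠ e} dim(S*_{e'}). -/

import Mathlib

open Module

open scoped Classical

/-- The submodule of vectors in `F^I` supported inside `J` (vanishing outside `J`). -/
def suppSub (F : Type*) [Field F] {I : Type*} (J : Set I) : Submodule F (I → F) where
  carrier := {x | ∀ i ∉ J, x i = 0}
  add_mem' := by
    intro a b ha hb i hi
    show a i + b i = 0
    rw [ha i hi, hb i hi, add_zero]
  zero_mem' := fun i _ => rfl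
  smul_mem' := by
    intro c a ha i hi
    show c • a i = 0
    rw [ha i hi, smul_zero]

variable {F : Type*} [Field F] {I V : Type*} [Fintype I] [Fintype V]

/-- The projection `C|_J` of a code `C ⊆ F^I` onto the coordinates in `J`. -/
noncomputable def projCode (C : Submodule F (I → F)) (J : Set I) : Submodule F (↥J → F) :=
  C.map (LinearMap.funLeft F F (Subtype.val : ↥J → I))

/-- The cross-section `C_J = {c|_J : c ∈ C, c|_{I∖J} = 0}`. -/
noncomputable def crossCode (C : Submodule F (I → F)) (J : Set I) : Submodule F (↥J → F) :=
  (C ⊓ suppSub F J).map (LinearMap.funLeft F F (Subtype.val : ↥J → I))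

/-- For adjacent vertices `v, w`, the index set `J(e)` carried by the component of
`T − e` containing `w` (i.e., not containing `v`), for the edge `e = {v,w}`. -/
def edgeIndexSet (G : SimpleGraph V) (ω : I → V) (v w : V) : Set I :=
  ω ⁻¹' {z | (G.deleteEdges {s(v, w)}).Reachable z w}

/-- The subspace `C_{J(e)} ⊕ C_{J̄(e)}` of `C` (as a submodule of `↥C`), for the
edge `e = {v,w}`. -/
noncomputable def edgeSub (G : SimpleGraph V) (ω : I → V) (C : Submodule F (I → F))
    (v w : V) : Submodule F ↥C :=
  ((C ⊓ suppSub F (edgeIndexSet G ω v w)) ⊔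
    (C ⊓ suppSub F (edgeIndexSet G ω v w)ᶜ)).comap C.subtype


section InstanceHelpers

variable (C : Submodule F (I → F)) {A B : Type*} (N : A → Submodule F ↥C)

noncomputable instance submoduleQuotPiAddCommGroup
    (P : Submodule F ((B → F) × ((a : A) → ↥C ⧸ N a))) : AddCommGroup ↥P :=
  letI m1 : AddCommGroup ((B → F) × ((a : A) → ↥C ⧸ N a)) := inferInstance
  letI m2 : Module F ((B → F) × ((a : A) → ↥C ⧸ N a)) := inferInstance
  Submodule.addCommGroup P

noncomputable instance submoduleQuotPiModule
    (P : Submodule F ((B → F) × ((a : A) → ↥C ⧸ N a))) : Module F ↥P :=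
  letI m1 : AddCommGroup ((B → F) × ((a : A) → ↥C ⧸ N a)) := inferInstance
  letI m2 : Module F ((B → F) × ((a : A) → ↥C ⧸ N a)) := inferInstance
  Submodule.module P

end InstanceHelpers

/-- The map realizing the minimal local constraint code `C*_v`:
`c ↦ (c|_{ω⁻¹(v)}, (s*_e(c))_{e ∈ E(v)})`, where incident edges are parametrized by the
neighbors `w` of `v` and `s*_e : C → C/(C_{J(e)} ⊕ C_{J̄(e)})` is the quotient map. -/
noncomputable def cStarMap (G : SimpleGraph V) (ω : I → V) (C : Submodule F (I → F))
    (v : V) :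
    ↥C →ₗ[F] ((↥(ω ⁻¹' {v}) → F) ×
      ((w : ↥(G.neighborSet v)) → (↥C ⧸ edgeSub G ω C v w.val))) :=
  LinearMap.prod
    ((LinearMap.funLeft F F Subtype.val).comp C.subtype)
    (LinearMap.pi (fun w => (edgeSub G ω C v w.val).mkQ))

/-- The minimal local constraint code `C*_v`. -/
noncomputable def cStar (G : SimpleGraph V) (ω : I → V) (C : Submodule F (I → F))
    (v : V) :=
  LinearMap.range (cStarMap G ω C v)

section TreeLemmas

variable {V : Type*} {G : SimpleGraph V}

lemma tree_not_reachable_delete (hT : G.IsTree) {v w : V} (h : G.Adj v w) :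
    ¬ (G.deleteEdges {s(v, w)}).Reachable v w := by
  have hb : G.IsBridge s(v, w) :=
    (SimpleGraph.isAcyclic_iff_forall_adj_isBridge.mp hT.IsAcyclic) h
  exact SimpleGraph.isBridge_iff.mp hb

lemma exists_walk_avoid (hT : G.IsTree) {v w z : V} (h : G.Adj v w)
    (hz : (G.deleteEdges {s(v, w)}).Reachable z w) :
    ∃ p : (G.deleteEdges {s(v, w)}).Walk z w, v ∉ p.support := by
  obtain ⟨p⟩ := hz
  by_cases hv : v ∈ p.support
  · exact ((tree_not_reachable_delete hT h) ⟨p.dropUntil v hv⟩).elim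
  · exact ⟨p, hv⟩

lemma transfer_walk_avoid {v w w' a b : V} (p : (G.deleteEdges {s(v, w)}).Walk a b)
    (hv : v ∉ p.support) :
    ∃ q : (G.deleteEdges {s(v, w')}).Walk a b, v ∉ q.support := by
  have hedges : ∀ e ∈ p.edges, e ∈ (G.deleteEdges {s(v, w')}).edgeSet := by
    intro e he
    have h1 : e ∈ (G.deleteEdges {s(v, w)}).edgeSet := p.edges_subset_edgeSet he
    rw [SimpleGraph.edgeSet_deleteEdges] at h1 ⊢
    refine ⟨h1.1, ?_⟩
    intro hc
    rw [Set.mem_singleton_iff] at hc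
    subst hc
    exact hv (p.fst_mem_support_of_mem_edges he)
  refine ⟨p.transfer _ hedges, ?_⟩
  rwa [SimpleGraph.Walk.support_transfer]

lemma tree_branch_disjoint (hT : G.IsTree) {v w₁ w₂ z : V} (h1 : G.Adj v w₁)
    (h2 : G.Adj v w₂) (hne : w₁ ≠ w₂)
    (r1 : (G.deleteEdges {s(v, w₁)}).Reachable z w₁)
    (r2 : (G.deleteEdges {s(v, w₂)}).Reachable z w₂) : False := by
  obtain ⟨p₂, hp₂⟩ := exists_walk_avoid hT h2 r2
  obtain ⟨q, hq⟩ := transfer_walk_avoid (w' := w₁) p₂ hp₂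
  have hadj : (G.deleteEdges {s(v, w₁)}).Adj v w₂ := by
    rw [SimpleGraph.deleteEdges_adj]
    refine ⟨h2, ?_⟩
    intro hc
    rw [Set.mem_singleton_iff, Sym2.eq_iff] at hc
    rcases hc with ⟨-, h⟩ | ⟨h1', -⟩
    · exact hne h.symm
    · exact G.ne_of_adj h1 h1'
  exact tree_not_reachable_delete hT h1
    ((hadj.reachable.trans (SimpleGraph.Walk.reachable q).symm).trans r1)

lemma tree_exists_branch (hT : G.IsTree) {v z : V} (hz : z ≠ v) :
    ∃ w₀, G.Adj v w₀ ∧ (G.deleteEdges {s(v, w₀)}).Reachable z w₀ := by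
  obtain ⟨p0⟩ := hT.isConnected.preconnected v z
  obtain ⟨p, hp⟩ := p0.toPath
  cases p with
  | nil => exact (hz rfl).elim
  | @cons _ w₀ _ h q =>
    rw [SimpleGraph.Walk.cons_isPath_iff] at hp
    refine ⟨w₀, h, ?_⟩
    have hedges : ∀ e ∈ q.edges, e ∈ (G.deleteEdges {s(v, w₀)}).edgeSet := by
      intro e he
      rw [SimpleGraph.edgeSet_deleteEdges]
      refine ⟨q.edges_subset_edgeSet he, ?_⟩
      intro hc
      rw [Set.mem_singleton_iff] at hc
      subst hc
      exact hp.2 (q.fst_mem_support_of_mem_edges he)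
    exact ⟨(q.transfer _ hedges).reverse⟩

end TreeLemmas

section SetFacts

variable {V : Type*} {G : SimpleGraph V} {I : Type*}

lemma omega_ne_of_mem_edgeIndexSet (hT : G.IsTree) {ω : I → V} {v : V}
    {w' : V} (h : G.Adj v w') {i : I} (hi : i ∈ edgeIndexSet G ω v w') : ω i ≠ v := by
  intro hv
  exact tree_not_reachable_delete hT h (hv ▸ hi)

lemma edgeIndexSet_disjoint (hT : G.IsTree) {ω : I → V} {v : V} {w₁ w₂ : V}
    (h1 : G.Adj v w₁) (h2 : G.Adj v w₂) (hne : w₁ ≠ w₂) {i : I}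
    (hi1 : i ∈ edgeIndexSet G ω v w₁) (hi2 : i ∈ edgeIndexSet G ω v w₂) : False :=
  tree_branch_disjoint hT h1 h2 hne hi1 hi2

lemma exists_mem_edgeIndexSet (hT : G.IsTree) {ω : I → V} {v : V} {i : I}
    (hi : ω i ≠ v) : ∃ w₀, G.Adj v w₀ ∧ i ∈ edgeIndexSet G ω v w₀ :=
  tree_exists_branch hT hi

end SetFacts

section MainLemma

variable {F : Type*} [Field F] {I V : Type*} [Fintype I] [Fintype V]

lemma mem_suppSub_iff {J : Set I} {x : I → F} :
    x ∈ suppSub F J ↔ ∀ i ∉ J, x i = 0 := Iff.rfl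

lemma mem_edgeSub_of_forall (G : SimpleGraph V) (hT : G.IsTree) (ω : I → V)
    (C : Submodule F (I → F)) (v : V) (w : ↥(G.neighborSet v)) (x : ↥C)
    (h0 : ∀ i : I, ω i = v → (x : I → F) i = 0)
    (h1 : ∀ w' : ↥(G.neighborSet v), w' ≠ w → x ∈ edgeSub G ω C v w'.val) :
    x ∈ edgeSub G ω C v w.val := by
  classical
  have hvalne : ∀ w₁ w₂ : ↥(G.neighborSet v), w₁ ≠ w₂ → (w₁ : V) ≠ (w₂ : V) :=
    fun w₁ w₂ h hc => h (Subtype.ext hc)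
  -- choose decompositions
  have H : ∀ w' : ↥(G.neighborSet v), ∃ a : I → F, a ∈ C ∧
      (∀ i ∉ edgeIndexSet G ω v w'.val, a i = 0) ∧ (w' ≠ w → ∀ i ∈ edgeIndexSet G ω v w'.val, (x : I → F) i = a i) := by
    intro w'
    by_cases hw : w' = w
    · exact ⟨0, C.zero_mem, fun _ _ => rfl, fun h => absurd hw h⟩
    · have hx := h1 w' hw
      rw [edgeSub, Submodule.mem_comap] at hx
      rw [Submodule.mem_sup] at hx
      obtain ⟨y, hy, z, hz, hyz⟩ := hx
      refine ⟨y, hy.1, hy.2, fun _ i hi => ?_⟩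
      have hzi : z i = 0 := hz.2 i (by simp [hi])
      have h' : (x : I → F) i = y i + z i := (congrFun hyz i).symm
      rw [h', hzi, add_zero]
  choose a haC hasupp hax using H
  set b : I → F := ∑ w' ∈ Finset.univ.erase w, a w' with hb
  have hbapp : ∀ i, b i = ∑ w' ∈ Finset.univ.erase w, a w' i := by
    intro i; rw [hb]; exact Finset.sum_apply i _ _
  rw [edgeSub, Submodule.mem_comap, Submodule.mem_sup]
  refine ⟨(x : I → F) - b, ⟨?_, ?_⟩, b, ⟨?_, ?_⟩, by abel⟩
  · exact C.sub_mem x.2 (Submodule.sum_mem C (fun w' _ => haC w'))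
  · -- supported in J w
    intro i hi
    by_cases hv : ω i = v
    · have hx0 := h0 i hv
      have : ∀ w' ∈ Finset.univ.erase w, a w' i = 0 := by
        intro w' hw'
        refine hasupp w' i (fun hmem => ?_)
        exact omega_ne_of_mem_edgeIndexSet hT w'.2 hmem hv
      show (x : I → F) i - b i = 0
      rw [hx0, hbapp, Finset.sum_eq_zero this, sub_zero]
    · obtain ⟨w₀, hadj, hmem⟩ := exists_mem_edgeIndexSet hT (ω := ω) (v := v) hv
      set w'' : ↥(G.neighborSet v) := ⟨w₀, hadj⟩ with hw''
      have hw''ne : w'' ≠ w := by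
        intro hc
        have hve : w₀ = (w : V) := congrArg Subtype.val hc
        exact hi (hve ▸ hmem)
      have hxi : (x : I → F) i = a w'' i := hax w'' hw''ne i hmem
      have hbi : b i = a w'' i := by
        rw [hbapp]
        refine Finset.sum_eq_single w'' (fun w' hw' hne => ?_) (fun hc => ?_)
        · refine hasupp w' i (fun hmem' => ?_)
          exact edgeIndexSet_disjoint hT hadj w'.2 (hvalne _ _ (Ne.symm hne)) hmem hmem'
        · exact absurd (Finset.mem_erase.mpr ⟨hw''ne, Finset.mem_univ _⟩) hc
      show (x : I → F) i - b i = 0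
      rw [hxi, hbi, sub_self]
  · exact Submodule.sum_mem C (fun w' _ => haC w')
  · -- b supported in (J w)ᶜ
    intro i hi
    rw [Set.notMem_compl_iff] at hi
    rw [hbapp]
    refine Finset.sum_eq_zero (fun w' hw' => ?_)
    refine hasupp w' i (fun hmem' => ?_)
    have hne := (Finset.mem_erase.mp hw').1
    exact edgeIndexSet_disjoint hT w.2 w'.2 (hvalne _ _ (Ne.symm hne)) hi hmem'

end MainLemma


lemma finrank_le_inf_add_sum {F : Type*} [Field F] {M : Type*} [AddCommGroup M] [Module F M]
    [FiniteDimensional F M] {α : Type*} [DecidableEq α] (s : Finset α)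
    (N : α → Submodule F M) (K : Submodule F M) :
    finrank F ↥K ≤ finrank F ↥(K ⊓ s.inf N) + ∑ a ∈ s, finrank F (M ⧸ N a) := by
  classical
  induction s using Finset.induction_on with
  | empty =>
    rw [Finset.inf_empty, inf_top_eq]
    simp
  | @insert a s ha ih =>
    rw [Finset.inf_insert, Finset.sum_insert ha]
    have heq : K ⊓ (N a ⊓ s.inf N) = (K ⊓ s.inf N) ⊓ N a := by
      rw [inf_comm (N a) (s.inf N), ← inf_assoc]
    have hd := Submodule.finrank_sup_add_finrank_inf_eq (K ⊓ s.inf N) (N a)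
    have hq := Submodule.finrank_quotient_add_finrank (N a)
    have hs : finrank F ↥((K ⊓ s.inf N) ⊔ N a) ≤ finrank F M := Submodule.finrank_le _
    rw [heq]
    omega

set_option synthInstance.maxHeartbeats 1000000
set_option maxHeartbeats 1000000

/-- in the minimal tree realization, for every vertex `v` and every edge
`e = {v,w}` incident with `v`:
`dim S*_e ≤ dim C*_v ≤ dim C|_{ω⁻¹(v)} + ∑_{e' ∈ E(v), e' ≠ e} dim S*_{e'}`. -/
theorem cStar_dim_bounds (G : SimpleGraph V) (hT : G.IsTree) (ω : I → V)
    (C : Submodule F (I → F)) (v : V) (w : ↥(G.neighborSet v)) :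
    finrank F (↥C ⧸ edgeSub G ω C v w.val) ≤ finrank F ↥(cStar G ω C v) ∧
      finrank F ↥(cStar G ω C v) ≤
        finrank F ↥(projCode C (ω ⁻¹' {v})) +
          ∑ w' ∈ Finset.univ.erase w, finrank F (↥C ⧸ edgeSub G ω C v w'.val) := by
  classical
  constructor
  · -- lower bound: surjection from cStar onto the quotient at w
    haveI hfinCStar : Module.Finite F ↥(cStar G ω C v) :=
      Module.Finite.of_surjective (cStarMap G ω C v).rangeRestrict
        (LinearMap.surjective_rangeRestrict _)
    let π : ↥(cStar G ω C v) →ₗ[F] (↥C ⧸ edgeSub G ω C v w.val) :=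
      ((LinearMap.proj w).comp
        (LinearMap.snd F (↥(ω ⁻¹' {v}) → F) _)).comp (cStar G ω C v).subtype
    have hsurj : Function.Surjective π := by
      intro q
      obtain ⟨x, hx⟩ := Submodule.mkQ_surjective _ q
      exact ⟨⟨cStarMap G ω C v x, x, rfl⟩, hx⟩
    have hle := @LinearMap.finrank_range_le F ↥(cStar G ω C v) _ _ _ _
      (↥C ⧸ edgeSub G ω C v w.val) _ _ hfinCStar π
    have htop : LinearMap.range π = ⊤ := LinearMap.range_eq_top.mpr hsurj
    rw [htop] at hle
    have hle' : finrank F ↥(⊤ : Submodule F (↥C ⧸ edgeSub G ω C v w.val)) ≤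
        finrank F ↥(cStar G ω C v) := hle
    have htop2 : finrank F ↥(⊤ : Submodule F (↥C ⧸ edgeSub G ω C v w.val)) =
        finrank F (↥C ⧸ edgeSub G ω C v w.val) := finrank_top F _
    rwa [htop2] at hle'
  · -- upper bound
    let f0 : ↥C →ₗ[F] (↥(ω ⁻¹' {v}) → F) :=
      (LinearMap.funLeft F F (Subtype.val : ↥(ω ⁻¹' {v}) → I)).comp C.subtype
    have e3 := @LinearMap.finrank_range_add_finrank_ker F ↥C _ _ _
      (↥(ω ⁻¹' {v}) → F) _ (Pi.module _ _ _) _ f0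
    have hrange : LinearMap.range f0 = projCode C (ω ⁻¹' {v}) := by
      show LinearMap.range ((LinearMap.funLeft F F
        (Subtype.val : ↥(ω ⁻¹' {v}) → I)).comp C.subtype) = _
      rw [LinearMap.range_comp, Submodule.range_subtype]
      rfl
    have e3' : finrank F ↥(projCode C (ω ⁻¹' {v})) + finrank F ↥(LinearMap.ker f0) =
        finrank F ↥C := by
      rw [← hrange]
      exact e3
    -- the combined kernel is inside the kernel of cStarMap
    have hsub : LinearMap.ker f0 ⊓
        (Finset.univ.erase w).inf (fun w' => edgeSub G ω C v w'.val) ≤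
        LinearMap.ker (cStarMap G ω C v) := by
      intro x hx
      rw [Submodule.mem_inf] at hx
      obtain ⟨hx1, hx2⟩ := hx
      rw [Submodule.mem_finsetInf] at hx2
      rw [LinearMap.mem_ker] at hx1
      rw [LinearMap.mem_ker]
      have h0 : ∀ i : I, ω i = v → (x : I → F) i = 0 := by
        intro i hiv
        exact congrFun hx1 ⟨i, hiv⟩
      have h1 : ∀ w' : ↥(G.neighborSet v), w' ≠ w → x ∈ edgeSub G ω C v w'.val := by
        intro w' hw'
        exact hx2 w' (Finset.mem_erase.mpr ⟨hw', Finset.mem_univ _⟩)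
      have hmain : x ∈ edgeSub G ω C v w.val :=
        mem_edgeSub_of_forall G hT ω C v w x h0 h1
      rw [cStarMap, LinearMap.prod_apply, Prod.mk_eq_zero]
      constructor
      · funext i
        exact h0 i.1 i.2
      · funext w'
        show Submodule.Quotient.mk x = (0 : ↥C ⧸ edgeSub G ω C v w'.val)
        rw [Submodule.Quotient.mk_eq_zero]
        by_cases hww : w' = w
        · rw [hww]; exact hmain
        · exact h1 w' hww
    have hmono : finrank F ↥(LinearMap.ker f0 ⊓
          (Finset.univ.erase w).inf (fun w' => edgeSub G ω C v w'.val)) ≤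
        finrank F ↥(LinearMap.ker (cStarMap G ω C v)) :=
      Submodule.finrank_mono hsub
    have haux : finrank F ↥(LinearMap.ker f0) ≤
        finrank F ↥(LinearMap.ker f0 ⊓
          (Finset.univ.erase w).inf (fun w' => edgeSub G ω C v w'.val)) +
        ∑ w' ∈ Finset.univ.erase w, finrank F (↥C ⧸ edgeSub G ω C v w'.val) :=
      finrank_le_inf_add_sum (Finset.univ.erase w)
        (fun w' => edgeSub G ω C v w'.val) (LinearMap.ker f0)
    -- rank-nullity for cStarMap
    have e1 := LinearMap.finrank_range_add_finrank_ker (cStarMap G ω C v).rangeRestrict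
    rw [LinearMap.range_rangeRestrict, LinearMap.ker_rangeRestrict, finrank_top] at e1
    have e1' : finrank F ↥(cStar G ω C v) +
        finrank F ↥(LinearMap.ker (cStarMap G ω C v)) = finrank F ↥C := e1
    omega
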